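/- Let E be a nonzero finite-dimensional complex inner product space, let H₁ and H₂ be self-adjoint operators on E, and let S be a nonzero subspace of E such that H₂ x = 0 for every x ∈ S and ⟨x, H₂ x⟩ ≥ J‖x‖² for every x in the orthogonal complement of S. If J > 2‖H₁‖ and J ≥ 8‖H₁‖² + 2‖H₁‖, then λ₀(H₁|_S) − 1/8 ≤ λ₀(H₁ + H₂) ≤ λ₀(H₁|_S). -/

import Mathlib

/-- The smallest eigenvalue of a self-adjoint operator `A` on a nonzero
finite-dimensional complex inner ℂ product space, expressed as the infimum of the
Rayleigh quotient over unit vectors. -/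
noncomputable def groundEnergy {E : Type*} [NormedAddCommGroup E] [InnerProductSpace ℂ E]
    (A : E →L[ℂ] E) : ℝ :=
  ⨅ x : {x : E // ‖x‖ = 1}, (inner ℂ (x : E) (A (x : E)) : ℂ).re

/-- The infimum of the Rayleigh quotient of `A` over unit vectors lying in the
subspace `S`, i.e. the smallest eigenvalue of the restriction `A|_S`. -/
noncomputable def groundEnergyOn {E : Type*} [NormedAddCommGroup E] [InnerProductSpace ℂ E]
    (A : E →L[ℂ] E) (S : Submodule ℂ E) : ℝ :=
  ⨅ x : {x : E // x ∈ S ∧ ‖x‖ = 1}, (inner ℂ (x : E) (A (x : E)) : ℂ).re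

section Aux

variable {E : Type*} [NormedAddCommGroup E] [InnerProductSpace ℂ E]

lemma rayleigh_abs_le (A : E →L[ℂ] E) (x : E) :
    |(inner ℂ x (A x) : ℂ).re| ≤ ‖A‖ * ‖x‖ ^ 2 := by
  calc |(inner ℂ x (A x) : ℂ).re| ≤ ‖(inner ℂ x (A x) : ℂ)‖ := Complex.abs_re_le_norm _
    _ ≤ ‖x‖ * ‖A x‖ := norm_inner_le_norm _ _
    _ ≤ ‖x‖ * (‖A‖ * ‖x‖) := by gcongr; exact A.le_opNorm x
    _ = ‖A‖ * ‖x‖ ^ 2 := by ring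

lemma bddBelow_rayleigh (A : E →L[ℂ] E) :
    BddBelow (Set.range fun x : {x : E // ‖x‖ = 1} =>
      (inner ℂ (x : E) (A (x : E)) : ℂ).re) := by
  refine ⟨-‖A‖, ?_⟩
  rintro r ⟨⟨x, hx⟩, rfl⟩
  have h := (abs_le.mp (rayleigh_abs_le A x)).1
  simp only [hx, one_pow, mul_one] at h
  exact h

lemma bddBelow_rayleighOn (A : E →L[ℂ] E) (S : Submodule ℂ E) :
    BddBelow (Set.range fun x : {x : E // x ∈ S ∧ ‖x‖ = 1} =>
      (inner ℂ (x : E) (A (x : E)) : ℂ).re) := by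
  refine ⟨-‖A‖, ?_⟩
  rintro r ⟨⟨x, hx⟩, rfl⟩
  have h := (abs_le.mp (rayleigh_abs_le A x)).1
  simp only [hx.2, one_pow, mul_one] at h
  exact h

lemma rayleigh_smul (A : E →L[ℂ] E) (y : E) (c : ℝ) :
    (inner ℂ ((c : ℂ) • y) (A ((c : ℂ) • y)) : ℂ).re
      = c ^ 2 * (inner ℂ y (A y) : ℂ).re := by
  have hre : ∀ (r : ℝ) (w : ℂ), ((r : ℂ) * w).re = r * w.re := by intros; simp
  rw [map_smul, inner_smul_left, inner_smul_right, Complex.conj_ofReal,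
    ← mul_assoc, ← Complex.ofReal_mul, hre]
  ring

lemma groundEnergyOn_mul_le (A : E →L[ℂ] E) (S : Submodule ℂ E)
    [Nonempty {x : E // x ∈ S ∧ ‖x‖ = 1}] {y : E} (hy : y ∈ S) :
    groundEnergyOn A S * ‖y‖ ^ 2 ≤ (inner ℂ y (A y) : ℂ).re := by
  rcases eq_or_ne y 0 with rfl | hy0
  · simp
  · have hny : (0:ℝ) < ‖y‖ := norm_pos_iff.mpr hy0
    set u : E := ((‖y‖⁻¹ : ℝ) : ℂ) • y with hu
    have hun : ‖u‖ = 1 := by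
      rw [hu, norm_smul]
      simp [abs_of_nonneg (le_of_lt (inv_pos.mpr hny)), inv_mul_cancel₀ (ne_of_gt hny)]
    have huS : u ∈ S := S.smul_mem _ hy
    have h1 : groundEnergyOn A S ≤ (inner ℂ u (A u) : ℂ).re :=
      ciInf_le (bddBelow_rayleighOn A S) ⟨u, huS, hun⟩
    have h2 : (inner ℂ u (A u) : ℂ).re = (‖y‖⁻¹) ^ 2 * (inner ℂ y (A y) : ℂ).re :=
      rayleigh_smul A y _
    rw [h2] at h1
    have := mul_le_mul_of_nonneg_right h1 (le_of_lt (pow_pos hny 2))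
    calc groundEnergyOn A S * ‖y‖ ^ 2 ≤ (‖y‖⁻¹) ^ 2 * (inner ℂ y (A y) : ℂ).re * ‖y‖ ^ 2 := this
      _ = (inner ℂ y (A y) : ℂ).re := by
          field_simp

end Aux

/-- The corollary to the projection lemma: if moreover `J ≥ 8‖H₁‖² + 2‖H₁‖`, then
`λ₀(H₁|_S) − 1/8 ≤ λ₀(H₁ + H₂) ≤ λ₀(H₁|_S)`. -/
theorem projection_lemma_eighth
    {E : Type*} [NormedAddCommGroup E] [InnerProductSpace ℂ E]
    [FiniteDimensional ℂ E] [Nontrivial E]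
    (H₁ H₂ : E →L[ℂ] E) (hH₁ : IsSelfAdjoint H₁) (hH₂ : IsSelfAdjoint H₂)
    (S : Submodule ℂ E) (hS : S ≠ ⊥)
    (hker : ∀ x ∈ S, H₂ x = 0)
    (J : ℝ) (hJ : J > 2 * ‖H₁‖) (hJ' : J ≥ 8 * ‖H₁‖ ^ 2 + 2 * ‖H₁‖)
    (hgap : ∀ x ∈ Sᗮ, J * ‖x‖ ^ 2 ≤ (inner ℂ x (H₂ x) : ℂ).re) :
    groundEnergyOn H₁ S - 1 / 8 ≤ groundEnergy (H₁ + H₂) ∧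
      groundEnergy (H₁ + H₂) ≤ groundEnergyOn H₁ S := by
  -- nonempty index types
  obtain ⟨y₀, hy₀S, hy₀⟩ : ∃ y : E, y ∈ S ∧ y ≠ 0 := by
    obtain ⟨y, hyS, hy⟩ := Submodule.exists_mem_ne_zero_of_ne_bot hS
    exact ⟨y, hyS, hy⟩
  have hny₀ : (0:ℝ) < ‖y₀‖ := norm_pos_iff.mpr hy₀
  have hu₀ : ∃ u : E, u ∈ S ∧ ‖u‖ = 1 := by
    refine ⟨((‖y₀‖⁻¹ : ℝ) : ℂ) • y₀, S.smul_mem _ hy₀S, ?_⟩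
    rw [norm_smul]
    simp [abs_of_nonneg (le_of_lt (inv_pos.mpr hny₀)), inv_mul_cancel₀ (ne_of_gt hny₀)]
  haveI hne2 : Nonempty {x : E // x ∈ S ∧ ‖x‖ = 1} := by
    obtain ⟨u, h1, h2⟩ := hu₀; exact ⟨⟨u, h1, h2⟩⟩
  haveI hne1 : Nonempty {x : E // ‖x‖ = 1} := by
    obtain ⟨u, _, h2⟩ := hu₀; exact ⟨⟨u, h2⟩⟩
  set L : ℝ := ‖H₁‖ with hL
  have hL0 : (0:ℝ) ≤ L := norm_nonneg _
  set m : ℝ := groundEnergyOn H₁ S with hm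
  -- |m| ≤ L
  have hmL : |m| ≤ L := by
    obtain ⟨u, huS, hun⟩ := hu₀
    have h1 : m ≤ (inner ℂ u (H₁ u) : ℂ).re := ciInf_le (bddBelow_rayleighOn H₁ S) ⟨u, huS, hun⟩
    have h2 := abs_le.mp (rayleigh_abs_le H₁ u)
    rw [hun] at h2
    simp only [one_pow, mul_one] at h2
    have h3 : -L ≤ m := by
      refine le_ciInf fun z => ?_
      have h4 := (abs_le.mp (rayleigh_abs_le H₁ (z : E))).1
      rw [z.2.2] at h4
      simpa using h4
    exact abs_le.mpr ⟨h3, le_trans h1 h2.2⟩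
  have hSym₂ := ContinuousLinearMap.isSelfAdjoint_iff_isSymmetric.mp hH₂
  constructor
  · -- lower bound
    refine le_ciInf fun xx => ?_
    obtain ⟨x, hx⟩ := xx
    set y : E := (S.orthogonalProjectionOnto x : E) with hy
    set z : E := x - y with hz
    have hyS : y ∈ S := (S.orthogonalProjectionOnto x).2
    have hzS : z ∈ Sᗮ := S.sub_starProjection_mem_orthogonal x
    have hxyz : x = y + z := by rw [hz]; abel
    have hinner_yz : (inner ℂ y z : ℂ) = 0 :=
      Submodule.inner_right_of_mem_orthogonal hyS hzS
    -- norms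
    have hnorm : ‖y‖ ^ 2 + ‖z‖ ^ 2 = 1 := by
      have := @norm_add_sq ℂ E _ _ _ y z
      rw [← hxyz, hx, hinner_yz] at this
      simpa using this.symm
    set a : ℝ := ‖y‖
    set t : ℝ := ‖z‖
    have ha0 : 0 ≤ a := norm_nonneg _
    have ht0 : 0 ≤ t := norm_nonneg _
    -- expand the Rayleigh quotient
    have hH₂y : H₂ y = 0 := hker y hyS
    have hyH₂z : (inner ℂ y (H₂ z) : ℂ) = 0 := by
      have h := hSym₂ y z
      simp only [ContinuousLinearMap.coe_coe] at h
      rw [← h, hH₂y, inner_zero_left]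
    have hexp : (inner ℂ x ((H₁ + H₂) x) : ℂ).re
        = (inner ℂ y (H₁ y) : ℂ).re + (inner ℂ y (H₁ z) : ℂ).re
          + (inner ℂ z (H₁ y) : ℂ).re + (inner ℂ z (H₁ z) : ℂ).re
          + (inner ℂ z (H₂ z) : ℂ).re := by
      rw [hxyz]
      simp only [ContinuousLinearMap.add_apply, map_add, hH₂y, zero_add,
        inner_add_add_self, inner_add_left, inner_add_right, hyH₂z]
      ring_nf
      simp [Complex.add_re]
      ring
    -- individual bounds
    have hb1 : m * a ^ 2 ≤ (inner ℂ y (H₁ y) : ℂ).re := groundEnergyOn_mul_le H₁ S hyS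
    have hb2 : -(L * a * t) ≤ (inner ℂ y (H₁ z) : ℂ).re := by
      have h := (abs_le.mp (rayleigh_abs_le H₁ y)).1
      have h' : |(inner ℂ y (H₁ z) : ℂ).re| ≤ L * a * t := by
        calc |(inner ℂ y (H₁ z) : ℂ).re| ≤ ‖(inner ℂ y (H₁ z) : ℂ)‖ := Complex.abs_re_le_norm _
          _ ≤ ‖y‖ * ‖H₁ z‖ := norm_inner_le_norm _ _
          _ ≤ ‖y‖ * (L * ‖z‖) := by gcongr; exact H₁.le_opNorm z
          _ = L * a * t := by ring
      linarith [(abs_le.mp h').1]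
    have hb3 : -(L * a * t) ≤ (inner ℂ z (H₁ y) : ℂ).re := by
      have h' : |(inner ℂ z (H₁ y) : ℂ).re| ≤ L * a * t := by
        calc |(inner ℂ z (H₁ y) : ℂ).re| ≤ ‖(inner ℂ z (H₁ y) : ℂ)‖ := Complex.abs_re_le_norm _
          _ ≤ ‖z‖ * ‖H₁ y‖ := norm_inner_le_norm _ _
          _ ≤ ‖z‖ * (L * ‖y‖) := by gcongr; exact H₁.le_opNorm y
          _ = L * a * t := by ring
      linarith [(abs_le.mp h').1]
    have hb4 : -(L * t ^ 2) ≤ (inner ℂ z (H₁ z) : ℂ).re := by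
      have h' := (abs_le.mp (rayleigh_abs_le H₁ z)).1
      simpa using h'
    have hb5 : J * t ^ 2 ≤ (inner ℂ z (H₂ z) : ℂ).re := hgap z hzS
    have hmabs := abs_le.mp hmL
    -- final arithmetic
    rw [hexp]
    have ha1 : a ≤ 1 := by nlinarith
    have ht1 : t ≤ 1 := by nlinarith
    nlinarith [sq_nonneg (8 * L * t - 1), sq_nonneg t, mul_nonneg (mul_nonneg hL0 ht0) ht0,
      mul_nonneg ht0 ht0, mul_le_mul_of_nonneg_right hJ'.le (mul_nonneg ht0 ht0),
      mul_nonneg (mul_nonneg hL0 (sub_nonneg.mpr ha1)) ht0]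
  · -- upper bound
    refine le_ciInf fun xx => ?_
    obtain ⟨x, hxS, hx⟩ := xx
    have h1 : groundEnergy (H₁ + H₂) ≤ (inner ℂ x ((H₁ + H₂) x) : ℂ).re :=
      ciInf_le (bddBelow_rayleigh (H₁ + H₂)) ⟨x, hx⟩
    have h2 : (inner ℂ x ((H₁ + H₂) x) : ℂ) = inner ℂ x (H₁ x) := by
      simp [ContinuousLinearMap.add_apply, hker x hxS, inner_add_right]
    rw [h2] at h1
    exact h1
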